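/- For all x, y ∈ B², w_{B²}(x,y) ≤ p_{B²}(x,y) ≤ √2·w_{B²}(x,y). Equality w_{B²} = p_{B²} holds when x, y lie on the same ray from the origin, and p_{B²}(x,y) = √2·w_{B²}(x,y) holds for x = −y with |x| = 1/2. -/

import Mathlib

open Metric Set

/-- `x̃ = x(2−|x|)/|x|`. -/
noncomputable def tilde (x : ℂ) : ℂ := (((2 - norm x) / norm x : ℝ) : ℂ) * x

/-- The quasi-metric `w` of the unit disk. -/
noncomputable def wB (x y : ℂ) : ℝ :=
  if x = 0 then norm y / (2 - norm y)
  else if y = 0 then norm x / (2 - norm x)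
  else norm (x - y) / min (norm (x - tilde y)) (norm (y - tilde x))

/-- The point pair function of the unit disk. -/
noncomputable def pB (x y : ℂ) : ℝ :=
  norm (x - y) /
    Real.sqrt (norm (x - y) ^ 2 + 4 * (1 - norm x) * (1 - norm y))

/- ### Auxiliary real inequality lemmas -/

private lemma real_lower (A B D T E : ℝ) (hA0 : 0 < A) (hA1 : A < 1)
    (hE : A * E^2 = A * B^2 + A * (2-A)^2 - 2*(2-A)*T)
    (hD : D^2 = A^2 + B^2 - 2*T) (hT : |T| ≤ A * B) :
    D^2 + 4*(1-A)*(1-B) ≤ E^2 := by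
  rw [abs_le] at hT
  nlinarith [mul_nonneg (by linarith : (0:ℝ) ≤ 1 - A) (by linarith : (0:ℝ) ≤ A*B - T)]

private lemma real_upper (A B D T E : ℝ) (hA0 : 0 < A) (hA1 : A < 1) (hB0 : 0 ≤ B)
    (hBA : B ≤ A)
    (hE : A * E^2 = A * B^2 + A * (2-A)^2 - 2*(2-A)*T)
    (hD : D^2 = A^2 + B^2 - 2*T) (hT : |T| ≤ A * B) :
    E^2 ≤ 2*D^2 + 8*(1-A)*(1-B) := by
  rw [abs_le] at hT
  have key : A * E^2 ≤ A * (2*D^2 + 8*(1-A)*(1-B)) := by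
    rcases le_or_gt (3*A) 2 with h | h
    · have h1 : 0 ≤ (2-3*A)*((A+B)^2 - D^2) :=
        mul_nonneg (by linarith) (by nlinarith [hT.1])
      have h2 : 0 ≤ A * (4*(2*A-1)^2) := mul_nonneg hA0.le (by positivity)
      have h3 : 0 ≤ A * ((12-15*A-B)*(A-B)) :=
        mul_nonneg hA0.le (mul_nonneg (by linarith) (by linarith))
      nlinarith [h1, h2, h3]
    · have h1 : 0 ≤ (3*A-2)*D^2 := mul_nonneg (by linarith) (sq_nonneg D)
      have h2 : 0 ≤ 2*(1-A)*(A-B)^2 := mul_nonneg (by linarith) (sq_nonneg _)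
      have h3 : 0 ≤ 4*A*(1-A)*(1-B) :=
        mul_nonneg (mul_nonneg (by linarith) (by linarith))
          (by linarith [lt_of_le_of_lt hBA hA1])
      nlinarith [h1, h2, h3]
  exact le_of_mul_le_mul_left key hA0

/- ### Complex-analytic plumbing -/

private lemma abs_tilde {x : ℂ} (hx : x ≠ 0) (h2 : norm x ≤ 2) :
    norm (tilde x) = 2 - norm x := by
  have hA : 0 < norm x := norm_pos_iff.mpr hx
  unfold tilde
  rw [norm_mul, Complex.norm_real, Real.norm_eq_abs, abs_of_nonneg (div_nonneg (by linarith) hA.le),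
    div_mul_cancel₀ _ hA.ne']

private lemma T_symm (x y : ℂ) :
    (y * (starRingEnd ℂ) x).re = (x * (starRingEnd ℂ) y).re := by
  rw [show y * (starRingEnd ℂ) x = (starRingEnd ℂ) (x * (starRingEnd ℂ) y) by
    rw [map_mul, Complex.conj_conj, mul_comm], Complex.conj_re]

private lemma absSubSqC (x y : ℂ) :
    norm (x - y)^2 =
      norm x^2 + norm y^2 - 2*(x * (starRingEnd ℂ) y).re := by
  rw [Complex.sq_norm, Complex.sq_norm, Complex.sq_norm, Complex.normSq_sub]

private lemma re_le (x y : ℂ) :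
    |(x * (starRingEnd ℂ) y).re| ≤ norm x * norm y := by
  calc |(x * (starRingEnd ℂ) y).re| ≤ norm (x * (starRingEnd ℂ) y) :=
        Complex.abs_re_le_norm _
    _ = norm x * norm y := by rw [norm_mul, Complex.norm_conj]

private lemma key_identity {x : ℂ} (y : ℂ) (hx : x ≠ 0) (h2 : norm x ≤ 2) :
    norm x * norm (y - tilde x) ^ 2 =
      norm x * norm y ^ 2 + norm x * (2 - norm x) ^ 2
        - 2 * (2 - norm x) * (x * (starRingEnd ℂ) y).re := by
  have hA : 0 < norm x := norm_pos_iff.mpr hx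
  set A := norm x with hAdef
  have h1 : norm (y - tilde x)^2 = Complex.normSq (y - tilde x) := Complex.sq_norm _
  rw [h1, Complex.normSq_sub]
  have h2' : Complex.normSq (tilde x) = (2-A)^2 := by
    rw [← Complex.sq_norm, abs_tilde hx h2]
  have h3 : (y * (starRingEnd ℂ) (tilde x)).re
      = (2-A)/A * (x * (starRingEnd ℂ) y).re := by
    unfold tilde
    rw [map_mul, Complex.conj_ofReal, show y * ((((2 - A) / A : ℝ) : ℂ) * (starRingEnd ℂ) x)
        = (((2 - A) / A : ℝ) : ℂ) * (y * (starRingEnd ℂ) x) by ring,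
      Complex.re_ofReal_mul, T_symm]
  rw [h2', h3, ← Complex.sq_norm y]
  field_simp

private lemma sqS_pos {x y : ℂ} (hA : norm x < 1) (hB : norm y < 1) :
    0 < norm (x - y) ^ 2 + 4 * (1 - norm x) * (1 - norm y) := by
  have h1 : 0 < 4 * (1 - norm x) * (1 - norm y) := by
    apply mul_pos (by linarith) (by linarith)
  nlinarith [sq_nonneg (norm (x - y))]

/-- `|y - x̃|² ≥ |x-y|² + 4(1-|x|)(1-|y|)`. -/
private lemma sq_lower {x y : ℂ} (hx : x ≠ 0) (hA : norm x < 1)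
    (hB : norm y < 1) :
    norm (x-y)^2 + 4*(1-norm x)*(1-norm y)
      ≤ norm (y - tilde x)^2 := by
  exact real_lower (norm x) (norm y) (norm (x-y))
    ((x * (starRingEnd ℂ) y).re) (norm (y - tilde x))
    (norm_pos_iff.mpr hx) hA (key_identity y hx (by linarith)) (absSubSqC x y) (re_le x y)

/-- `|y - x̃|² ≤ 2(|x-y|² + 4(1-|x|)(1-|y|))` when `|y| ≤ |x|`. -/
private lemma sq_upper {x y : ℂ} (hx : x ≠ 0) (hA : norm x < 1)
    (hBA : norm y ≤ norm x) :
    norm (y - tilde x)^2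
      ≤ 2*(norm (x-y)^2 + 4*(1-norm x)*(1-norm y)) := by
  have := real_upper (norm x) (norm y) (norm (x-y))
    ((x * (starRingEnd ℂ) y).re) (norm (y - tilde x))
    (norm_pos_iff.mpr hx) hA (norm_nonneg y) hBA
    (key_identity y hx (by linarith)) (absSubSqC x y) (re_le x y)
  linarith

private lemma abs_sub_tilde_pos {x y : ℂ} (hx : x ≠ 0) (hA : norm x < 1)
    (hB : norm y < 1) : 0 < norm (y - tilde x) := by
  have habs : norm (tilde x) = 2 - norm x := abs_tilde hx (by linarith)
  apply norm_pos_iff.mpr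
  intro h
  rw [sub_eq_zero] at h
  rw [h, habs] at hB
  linarith

/- ### symmetry -/

private lemma pB_symm (x y : ℂ) : pB x y = pB y x := by
  unfold pB
  rw [norm_sub_rev x y,
    show 4 * (1 - norm x) * (1 - norm y)
      = 4 * (1 - norm y) * (1 - norm x) by ring]

private lemma wB_symm (x y : ℂ) : wB x y = wB y x := by
  unfold wB
  by_cases hx : x = 0 <;> by_cases hy : y = 0 <;>
    simp [hx, hy, norm_sub_rev x y, min_comm]

/- ### x = 0 case -/

private lemma w_eq_p_left_zero {y : ℂ} (hB : norm y < 1) : wB 0 y = pB 0 y := by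
  unfold wB pB
  rw [if_pos rfl, zero_sub, norm_neg, norm_zero]
  rw [show norm y ^ 2 + 4 * (1 - 0) * (1 - norm y)
      = (2 - norm y)^2 by ring, Real.sqrt_sq (by linarith)]

private lemma w_eq_p_right_zero {x : ℂ} (hA : norm x < 1) : wB x 0 = pB x 0 := by
  rw [wB_symm, pB_symm]
  exact w_eq_p_left_zero hA

private lemma wB_nonneg (x y : ℂ) (hA : norm x < 1) (hB : norm y < 1) :
    0 ≤ wB x y := by
  unfold wB
  split_ifs with h1 h2
  · exact div_nonneg (norm_nonneg y) (by linarith)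
  · exact div_nonneg (norm_nonneg x) (by linarith)
  · exact div_nonneg (norm_nonneg _)
      (le_min (norm_nonneg _) (norm_nonneg _))

private lemma one_le_sqrt_two : (1:ℝ) ≤ Real.sqrt 2 := by
  rw [show (1:ℝ) = Real.sqrt 1 by simp]
  exact Real.sqrt_le_sqrt (by norm_num)

/- ### main inequality for nonzero points with |y| ≤ |x| -/

private lemma main_ineq {x y : ℂ} (hx : x ≠ 0) (hy : y ≠ 0) (hA : norm x < 1)
    (hB : norm y < 1) (hBA : norm y ≤ norm x) :
    wB x y ≤ pB x y ∧ pB x y ≤ Real.sqrt 2 * wB x y := by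
  set A := norm x
  set B := norm y
  set D := norm (x - y) with hDdef
  set E1 := norm (x - tilde y) with hE1def
  set E2 := norm (y - tilde x) with hE2def
  set S := D^2 + 4*(1-A)*(1-B) with hSdef
  have hS : 0 < S := sqS_pos hA hB
  have hE1pos : 0 < E1 := abs_sub_tilde_pos hy hB hA
  have hE2pos : 0 < E2 := abs_sub_tilde_pos hx hA hB
  have hmin : 0 < min E1 E2 := lt_min hE1pos hE2pos
  have hsq : 0 < Real.sqrt S := Real.sqrt_pos.mpr hS
  have hDnn : 0 ≤ D := norm_nonneg _
  have hlow2 : S ≤ E2^2 := sq_lower hx hA hB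
  have hlow1 : S ≤ E1^2 := by
    have := sq_lower hy hB hA
    rw [norm_sub_rev y x] at this
    rw [hSdef]
    linarith
  have hsqrt_le_min : Real.sqrt S ≤ min E1 E2 := by
    apply le_min
    · calc Real.sqrt S ≤ Real.sqrt (E1^2) := Real.sqrt_le_sqrt hlow1
        _ = E1 := Real.sqrt_sq hE1pos.le
    · calc Real.sqrt S ≤ Real.sqrt (E2^2) := Real.sqrt_le_sqrt hlow2
        _ = E2 := Real.sqrt_sq hE2pos.le
  have hwB : wB x y = D / min E1 E2 := by unfold wB; rw [if_neg hx, if_neg hy]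
  have hpB : pB x y = D / Real.sqrt S := by unfold pB; rfl
  constructor
  · rw [hwB, hpB]
    exact div_le_div_of_nonneg_left hDnn hsq hsqrt_le_min
  · rw [hwB, hpB]
    have hE2le : E2 ≤ Real.sqrt 2 * Real.sqrt S := by
      have h2S : E2^2 ≤ 2*S := by
        have := sq_upper hx hA hBA
        rw [hSdef]; linarith
      calc E2 = Real.sqrt (E2^2) := (Real.sqrt_sq hE2pos.le).symm
        _ ≤ Real.sqrt (2*S) := Real.sqrt_le_sqrt h2S
        _ = Real.sqrt 2 * Real.sqrt S := Real.sqrt_mul (by norm_num) S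
    rw [← mul_div_assoc, div_le_div_iff₀ hsq hmin]
    nlinarith [mul_le_mul_of_nonneg_left (min_le_right E1 E2) hDnn,
      mul_le_mul_of_nonneg_left hE2le hDnn]

/-- For all `x, y ∈ B²`, `w ≤ p ≤ √2 w`; equality `w = p` holds when `x, y` lie on the
same ray from the origin, and `p = √2 w` holds when `x = −y` with `|x| = 1/2`. -/
theorem w_le_p_le_sqrt_two_w :
    (∀ x y : ℂ, x ∈ Metric.ball (0 : ℂ) 1 → y ∈ Metric.ball (0 : ℂ) 1 →
      wB x y ≤ pB x y ∧ pB x y ≤ Real.sqrt 2 * wB x y) ∧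
    (∀ x y : ℂ, x ∈ Metric.ball (0 : ℂ) 1 → y ∈ Metric.ball (0 : ℂ) 1 →
      SameRay ℝ x y → wB x y = pB x y) ∧
    (∀ x : ℂ, norm x = 1/2 → pB x (-x) = Real.sqrt 2 * wB x (-x)) := by
  have hball : ∀ z : ℂ, z ∈ Metric.ball (0:ℂ) 1 → norm z < 1 := fun z hz => by
    rwa [mem_ball_zero_iff] at hz
  refine ⟨?_, ?_, ?_⟩
  · intro x y hx hy
    have hA := hball x hx
    have hB := hball y hy
    by_cases hx0 : x = 0
    · subst hx0
      have heq := w_eq_p_left_zero hB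
      have hw : 0 ≤ wB 0 y := wB_nonneg 0 y (by simpa using hA) hB
      refine ⟨heq.le, ?_⟩
      rw [← heq]
      nlinarith [one_le_sqrt_two, hw]
    by_cases hy0 : y = 0
    · subst hy0
      have heq := w_eq_p_right_zero hA
      have hw : 0 ≤ wB x 0 := wB_nonneg x 0 hA (by simpa using hB)
      refine ⟨heq.le, ?_⟩
      rw [← heq]
      nlinarith [one_le_sqrt_two, hw]
    rcases le_total (norm y) (norm x) with h | h
    · exact main_ineq hx0 hy0 hA hB h
    · have := main_ineq hy0 hx0 hB hA h
      rw [wB_symm x y, pB_symm x y]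
      exact this
  · intro x y hx hy hray
    have hA1 := hball x hx
    have hB1 := hball y hy
    by_cases hx0 : x = 0
    · subst hx0; exact w_eq_p_left_zero hB1
    by_cases hy0 : y = 0
    · subst hy0; exact w_eq_p_right_zero hA1
    set A := norm x with hAdef
    set B := norm y with hBdef
    have hA0 : 0 < A := norm_pos_iff.mpr hx0
    have hB0 : 0 < B := norm_pos_iff.mpr hy0
    have hD : norm (x - y) = |A - B| := by
      have := hray.norm_sub
      simpa using this
    have hT : (x * (starRingEnd ℂ) y).re = A * B := by
      have h1 := absSubSqC x y
      rw [hD] at h1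
      have h2 : |A - B|^2 = (A-B)^2 := sq_abs _
      nlinarith [h1, h2]
    have hE2 : norm (y - tilde x) = 2 - A - B := by
      have h1 := key_identity y hx0 (by linarith)
      rw [hT] at h1
      have h2 : A * norm (y - tilde x)^2 = A * ((2 - A - B)^2) := by
        rw [h1]; ring
      have h3 := mul_left_cancel₀ hA0.ne' h2
      calc norm (y - tilde x)
          = Real.sqrt (norm (y - tilde x)^2) :=
            (Real.sqrt_sq (norm_nonneg _)).symm
        _ = Real.sqrt ((2-A-B)^2) := by rw [h3]
        _ = 2 - A - B := Real.sqrt_sq (by linarith)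
    have hE1 : norm (x - tilde y) = 2 - A - B := by
      have h1 := key_identity x hy0 (by linarith)
      rw [T_symm, hT] at h1
      have h2 : B * norm (x - tilde y)^2 = B * ((2 - A - B)^2) := by
        rw [h1]; ring
      have h3 := mul_left_cancel₀ hB0.ne' h2
      calc norm (x - tilde y)
          = Real.sqrt (norm (x - tilde y)^2) :=
            (Real.sqrt_sq (norm_nonneg _)).symm
        _ = Real.sqrt ((2-A-B)^2) := by rw [h3]
        _ = 2 - A - B := Real.sqrt_sq (by linarith)
    unfold wB pB
    rw [if_neg hx0, if_neg hy0, hE1, hE2, min_self, hD, sq_abs,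
      show (A-B)^2 + 4*(1-A)*(1-B) = (2-A-B)^2 by ring,
      Real.sqrt_sq (by linarith)]
  · intro x hx
    have hx0 : x ≠ 0 := by
      intro h; rw [h] at hx; simp at hx
    have hnx0 : -x ≠ 0 := neg_ne_zero.mpr hx0
    have habsneg : norm (-x) = 1/2 := by rw [norm_neg]; exact hx
    have ht1 : tilde x = ((3:ℝ):ℂ) * x := by
      unfold tilde; rw [hx]; norm_num
    have ht2 : tilde (-x) = ((3:ℝ):ℂ) * (-x) := by
      unfold tilde; rw [habsneg]; norm_num
    have e0 : norm (x - -x) = 1 := by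
      rw [show x - -x = ((2:ℝ):ℂ) * x by push_cast; ring, norm_mul, Complex.norm_real, Real.norm_eq_abs, hx]
      norm_num
    have e2 : norm (x - tilde (-x)) = 2 := by
      rw [ht2, show x - ((3:ℝ):ℂ) * (-x) = ((4:ℝ):ℂ) * x by push_cast; ring,
        norm_mul, Complex.norm_real, Real.norm_eq_abs, hx]
      norm_num
    have e3 : norm (-x - tilde x) = 2 := by
      rw [ht1, show -x - ((3:ℝ):ℂ) * x = ((-4:ℝ):ℂ) * x by push_cast; ring,
        norm_mul, Complex.norm_real, Real.norm_eq_abs, hx]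
      norm_num
    unfold wB pB
    rw [if_neg hx0, if_neg hnx0, e0, e2, e3, hx, habsneg, min_self,
      show (1:ℝ)^2 + 4*(1-1/2)*(1-1/2) = 2 by norm_num]
    have h2 : Real.sqrt 2 * Real.sqrt 2 = 2 := Real.mul_self_sqrt (by norm_num)
    have h2pos : 0 < Real.sqrt 2 := Real.sqrt_pos.mpr (by norm_num)
    rw [div_eq_iff h2pos.ne']
    nlinarith [h2]
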